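/- Let L, L₀ be lagrangian subspaces of Ĥ = H ⊕ H. The following are equivalent: (a) L is the graph of an operator JA : L₀ → L₀⊥ with A bounded self-adjoint on L₀; (b) L ∩ L₀⊥ = {0} and L + L₀⊥ is closed; (b') Ĥ = L ⊕ L₀⊥ (direct sum); (b'') Ĥ = L + L₀⊥; (c) the operator R_L + R_{L₀} is invertible, where R_L := 2P_L − 1 is the orthogonal reflection in L. -/

import Mathlib

set_option linter.unusedSectionVars false


open scoped InnerProductSpace

noncomputable section

variable (H : Type) [NormedAddCommGroup H] [InnerProductSpace ℂ H] [CompleteSpace H]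

/-- `Ĥ = H ⊕ H` with the Hilbert (l²) structure. -/
abbrev Hh := WithLp 2 (H × H)

/-- The complex structure `J(x,y) = (y, -x)` on `Ĥ = H ⊕ H`. -/
def hatJ : Hh H →L[ℂ] Hh H :=
  (WithLp.prodContinuousLinearEquiv 2 ℂ H H).symm.toContinuousLinearMap ∘L
    ((ContinuousLinearMap.snd ℂ H H).prod (-(ContinuousLinearMap.fst ℂ H H))) ∘L
    (WithLp.prodContinuousLinearEquiv 2 ℂ H H).toContinuousLinearMap

/-- A subspace `L ⊆ Ĥ` is lagrangian if `JL = L⊥`. -/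
def IsLagrangian (L : Submodule ℂ (Hh H)) : Prop :=
  L.map (hatJ H).toLinearMap = Lᗮ

/-- The graph `{v + J(A v) : v ∈ L₀}` of `JA : L₀ → L₀⊥`. -/
def graphJA (L₀ : Submodule ℂ (Hh H)) (A : ↥L₀ →L[ℂ] ↥L₀) : Submodule ℂ (Hh H) :=
  LinearMap.range (L₀.subtype + ((hatJ H).toLinearMap.comp (L₀.subtype.comp A.toLinearMap)))

/-- The orthogonal reflection `R_L = 2 P_L - 1` in the closed subspace `L`. -/
def reflIn (L : Submodule ℂ (Hh H)) [CompleteSpace ↥L] : Hh H →L[ℂ] Hh H :=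
  (2 : ℂ) • (L.subtypeL ∘L L.orthogonalProjectionOnto) - 1


lemma hatJ_hatJ (x : Hh H) : hatJ H (hatJ H x) = -x := by simp [hatJ]; rfl

lemma inner_hatJ (x y : Hh H) : ⟪hatJ H x, hatJ H y⟫_ℂ = ⟪x, y⟫_ℂ := by
  simp [hatJ, WithLp.prod_inner_apply, add_comm]

variable {H}

lemma hatJ_eq_zero {x : Hh H} (h : hatJ H x = 0) : x = 0 := by
  have h2 := hatJ_hatJ H x
  rw [h, map_zero] at h2
  simpa using h2.symm

lemma IsLagrangian.J_mem {L : Submodule ℂ (Hh H)} (hL : IsLagrangian H L) {x : Hh H}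
    (hx : x ∈ L) : hatJ H x ∈ Lᗮ := by
  rw [← hL]; exact Submodule.mem_map_of_mem hx

lemma IsLagrangian.J_mem_orth {L : Submodule ℂ (Hh H)} (hL : IsLagrangian H L) {x : Hh H}
    (hx : x ∈ Lᗮ) : hatJ H x ∈ L := by
  rw [← hL] at hx
  obtain ⟨y, hy, rfl⟩ := hx
  show hatJ H (hatJ H y) ∈ L
  rw [hatJ_hatJ]
  exact L.neg_mem hy

lemma exists_proj_eq {L L₀ : Submodule ℂ (Hh H)} [CompleteSpace ↥L₀]
    (hsup : L ⊔ L₀ᗮ = ⊤) {u : Hh H} (hu : u ∈ L₀) :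
    ∃ a ∈ L, (↑(Submodule.orthogonalProjectionOnto L₀ a) : Hh H) = u := by
  have hm : u ∈ L ⊔ L₀ᗮ := by rw [hsup]; trivial
  obtain ⟨a, haL, b, hbO, hab⟩ := Submodule.mem_sup.1 hm
  refine ⟨a, haL, ?_⟩
  have h1 : (↑(Submodule.orthogonalProjectionOnto L₀ (a + b)) : Hh H) = u := by
    rw [hab]; exact Submodule.starProjection_eq_self_iff.2 hu
  rwa [map_add, Submodule.orthogonalProjectionOnto_apply_of_mem_orthogonal hbO,
    add_zero] at h1

variable (H)

/-- for lagrangians `L, L₀` of `Ĥ = H ⊕ H` the following are equivalent: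
(a) `L` is the graph of `JA : L₀ → L₀⊥` with `A` bounded self-adjoint on `L₀`;
(b) `L ∩ L₀⊥ = 0` and `L + L₀⊥` is closed;
(b') `Ĥ = L ⊕ L₀⊥`;
(b'') `Ĥ = L + L₀⊥`;
(c) `R_L + R_{L₀}` is invertible. -/
theorem arnold_chart_tfae (L L₀ : Submodule ℂ (Hh H))
    (hL : IsLagrangian H L) (hL₀ : IsLagrangian H L₀)
    [CompleteSpace ↥L] [CompleteSpace ↥L₀] :
    List.TFAE
      [ (∃ A : ↥L₀ →L[ℂ] ↥L₀, (∀ x y : ↥L₀, ⟪A x, y⟫_ℂ = ⟪x, A y⟫_ℂ) ∧ L = graphJA H L₀ A),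
        (L ⊓ L₀ᗮ = ⊥ ∧ IsClosed ((L ⊔ L₀ᗮ : Submodule ℂ (Hh H)) : Set (Hh H))),
        IsCompl L (L₀ᗮ),
        L ⊔ L₀ᗮ = ⊤,
        IsUnit (reflIn H L + reflIn H L₀) ] := by
  tfae_have 1 → 4 := by
    rintro ⟨A, hsa, hgraph⟩
    rw [eq_top_iff]
    rintro w -
    have hd : w ∈ L₀ ⊔ L₀ᗮ := by rw [Submodule.sup_orthogonal_of_hasOrthogonalProjection]; trivial
    obtain ⟨u, hu, z, hz, hw⟩ := Submodule.mem_sup.1 hd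
    rw [← hL₀] at hz
    obtain ⟨u', hu', rfl⟩ := hz
    set uu : ↥L₀ := ⟨u, hu⟩ with huu
    refine Submodule.mem_sup.2 ⟨u + hatJ H ↑(A uu), ?_, hatJ H (u' - ↑(A uu)), ?_, ?_⟩
    · rw [hgraph]
      refine ⟨uu, ?_⟩
      simp only [LinearMap.add_apply, LinearMap.coe_comp, Function.comp_apply,
        Submodule.coe_subtype, ContinuousLinearMap.coe_coe]
      rfl
    · rw [← hL₀]
      exact Submodule.mem_map_of_mem (L₀.sub_mem hu' (A uu).2)
    · rw [map_sub]
      simp only [ContinuousLinearMap.coe_coe] at hw ⊢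
      rw [← hw]; abel
  tfae_have 4 → 3 := by
    intro h4
    refine ⟨Submodule.disjoint_def.2 fun x hxL hxO => ?_, codisjoint_iff.2 h4⟩
    have h1 : hatJ H x ∈ Lᗮ := hL.J_mem hxL
    have h2 : hatJ H x ∈ L₀ := hL₀.J_mem_orth hxO
    have hx0 : hatJ H x = 0 := by
      have hmem : hatJ H x ∈ L ⊔ L₀ᗮ := by rw [h4]; trivial
      obtain ⟨a, haL, b, hbO, hab⟩ := Submodule.mem_sup.1 hmem
      have e1 : ⟪a, hatJ H x⟫_ℂ = 0 := (Submodule.mem_orthogonal L (hatJ H x)).1 h1 a haL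
      have e2 : ⟪b, hatJ H x⟫_ℂ = 0 := (Submodule.mem_orthogonal' L₀ b).1 hbO _ h2
      have hs : ⟪a + b, hatJ H x⟫_ℂ = 0 := by
        rw [inner_add_left, e1, e2, add_zero]
      rw [hab] at hs
      exact inner_self_eq_zero.1 hs
    simpa using hatJ_eq_zero hx0
  tfae_have 3 → 2 := by
    intro h3
    exact ⟨disjoint_iff.1 h3.1, by rw [codisjoint_iff.1 h3.2, Submodule.top_coe]; exact isClosed_univ⟩
  tfae_have 2 → 4 := by
    rintro ⟨hinf, hclosed⟩
    haveI : CompleteSpace ↥(L ⊔ L₀ᗮ : Submodule ℂ (Hh H)) := hclosed.completeSpace_coe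
    have horth : (L ⊔ L₀ᗮ)ᗮ = ⊥ := by
      rw [Submodule.eq_bot_iff]
      intro v hv
      have hvL : v ∈ Lᗮ := Submodule.orthogonal_le le_sup_left hv
      have hvO : v ∈ L₀ := by
        have := Submodule.orthogonal_le le_sup_right hv
        rwa [Submodule.orthogonal_orthogonal] at this
      have hJ1 : hatJ H v ∈ L := hL.J_mem_orth hvL
      have hJ2 : hatJ H v ∈ L₀ᗮ := hL₀.J_mem hvO
      have hb : hatJ H v ∈ (⊥ : Submodule ℂ (Hh H)) := hinf ▸ Submodule.mem_inf.2 ⟨hJ1, hJ2⟩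
      exact hatJ_eq_zero (by simpa using hb)
    calc L ⊔ L₀ᗮ = ((L ⊔ L₀ᗮ)ᗮ)ᗮ := (Submodule.orthogonal_orthogonal _).symm
      _ = ⊤ := by rw [horth, Submodule.bot_orthogonal_eq_top]
  tfae_have 3 → 1 := by
    intro h3
    let φ : ↥L →L[ℂ] ↥L₀ := Submodule.orthogonalProjectionOnto L₀ ∘L L.subtypeL
    have hker : φ.ker = ⊥ := by
      rw [Submodule.eq_bot_iff]
      rintro ⟨x, hx⟩ hmem
      have hx0 : Submodule.orthogonalProjectionOnto L₀ x = 0 := LinearMap.mem_ker.1 hmem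
      have hxO : x ∈ L₀ᗮ := Submodule.orthogonalProjectionOnto_eq_zero_iff.1 hx0
      have hxb : x ∈ L ⊓ L₀ᗮ := ⟨hx, hxO⟩
      rw [disjoint_iff.1 h3.1] at hxb
      exact Subtype.ext (by simpa using hxb)
    have hran : φ.range = ⊤ := by
      rw [LinearMap.range_eq_top]
      intro u
      obtain ⟨a, haL, hau⟩ := exists_proj_eq (codisjoint_iff.1 h3.2) u.2
      exact ⟨⟨a, haL⟩, Subtype.ext hau⟩
    let E : ↥L ≃L[ℂ] ↥L₀ := ContinuousLinearEquiv.ofBijective φ hker hran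
    let A : ↥L₀ →L[ℂ] ↥L₀ := Submodule.orthogonalProjectionOnto L₀ ∘L
      ((-(hatJ H)) ∘L (L.subtypeL ∘L (E.symm : ↥L₀ →L[ℂ] ↥L) - L₀.subtypeL))
    have hEproj : ∀ u : ↥L₀, Submodule.orthogonalProjectionOnto L₀ (↑(E.symm u) : Hh H) = u := by
      intro u
      have h2 : φ (E.symm u) = u := E.apply_symm_apply u
      exact h2
    have hw : ∀ u : ↥L₀, (↑(E.symm u) : Hh H) - ↑u ∈ L₀ᗮ := by
      intro u
      have hz : Submodule.orthogonalProjectionOnto L₀ ((↑(E.symm u) : Hh H) - ↑u) = 0 := by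
        rw [map_sub, hEproj u, Submodule.orthogonalProjectionOnto_mem_subspace_eq_self, sub_self]
      exact Submodule.orthogonalProjectionOnto_eq_zero_iff.1 hz
    have hA : ∀ u : ↥L₀, hatJ H ↑(A u) = (↑(E.symm u) : Hh H) - ↑u := by
      intro u
      have hmem : -(hatJ H ((↑(E.symm u) : Hh H) - ↑u)) ∈ L₀ :=
        L₀.neg_mem (hL₀.J_mem_orth (hw u))
      have hcoe : (↑(A u) : Hh H) = -(hatJ H ((↑(E.symm u) : Hh H) - ↑u)) := by
        have hrfl : A u = Submodule.orthogonalProjectionOnto L₀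
            (-(hatJ H ((↑(E.symm u) : Hh H) - ↑u))) := rfl
        rw [hrfl]
        exact Submodule.starProjection_eq_self_iff.2 hmem
      rw [hcoe, map_neg, hatJ_hatJ, neg_neg]
    have hgr : L = graphJA H L₀ A := by
      apply le_antisymm
      · intro x hx
        simp only [graphJA, LinearMap.mem_range]
        refine ⟨E ⟨x, hx⟩, ?_⟩
        show ↑(E ⟨x, hx⟩) + hatJ H ↑(A (E ⟨x, hx⟩)) = x
        rw [hA, E.symm_apply_apply]
        show (↑(E ⟨x, hx⟩) : Hh H) + (x - ↑(E ⟨x, hx⟩)) = x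
        abel
      · intro x hxg
        simp only [graphJA, LinearMap.mem_range] at hxg
        obtain ⟨u, rfl⟩ := hxg
        show (↑u + hatJ H ↑(A u) : Hh H) ∈ L
        rw [hA]
        have he : (↑u + ((↑(E.symm u) : Hh H) - ↑u)) = ↑(E.symm u) := by abel
        rw [he]
        exact (E.symm u).2
    refine ⟨A, ?_, hgr⟩
    intro x y
    have hxL : (↑x + hatJ H ↑(A x) : Hh H) ∈ L := by
      rw [hA]
      have he : (↑x + ((↑(E.symm x) : Hh H) - ↑x)) = ↑(E.symm x) := by abel
      rw [he]; exact (E.symm x).2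
    have hyL : (↑y + hatJ H ↑(A y) : Hh H) ∈ L := by
      rw [hA]
      have he : (↑y + ((↑(E.symm y) : Hh H) - ↑y)) = ↑(E.symm y) := by abel
      rw [he]; exact (E.symm y).2
    have horth : ⟪(↑x + hatJ H ↑(A x) : Hh H), hatJ H (↑y + hatJ H ↑(A y))⟫_ℂ = 0 :=
      (Submodule.mem_orthogonal L _).1 (hL.J_mem hyL) _ hxL
    have e1 : ⟪(↑x : Hh H), hatJ H ↑y⟫_ℂ = 0 :=
      (Submodule.mem_orthogonal L₀ _).1 (hL₀.J_mem y.2) _ x.2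
    have e2 : ⟪hatJ H (↑(A x) : Hh H), (↑(A y) : Hh H)⟫_ℂ = 0 :=
      (Submodule.mem_orthogonal' L₀ _).1 (hL₀.J_mem (A x).2) _ (A y).2
    rw [map_add, hatJ_hatJ, inner_add_left, inner_add_right, inner_add_right, e1,
      inner_hatJ, inner_neg_right, inner_neg_right, e2] at horth
    simp only [Submodule.coe_inner]
    linear_combination horth
  tfae_have 3 → 5 := by
    intro h3
    set T := reflIn H L + reflIn H L₀ with hTdef
    have hTapp : ∀ v, T v = (2:ℂ) • (↑(Submodule.orthogonalProjectionOnto L v) : Hh H)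
        + (2:ℂ) • (↑(Submodule.orthogonalProjectionOnto L₀ v) : Hh H) - (2:ℂ) • v := by
      intro v
      show reflIn H L v + reflIn H L₀ v = _
      simp only [reflIn, ContinuousLinearMap.sub_apply, ContinuousLinearMap.smul_apply,
        ContinuousLinearMap.comp_apply, ContinuousLinearMap.one_apply,
        Submodule.subtypeL_apply]
      module
    have hker : T.ker = ⊥ := by
      rw [Submodule.eq_bot_iff]
      intro v hv
      rw [LinearMap.mem_ker, ContinuousLinearMap.coe_coe] at hv
      rw [hTapp v] at hv
      have h4 : (2:ℂ) • (((↑(Submodule.orthogonalProjectionOnto L v) : Hh H)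
          + ↑(Submodule.orthogonalProjectionOnto L₀ v)) - v) = 0 := by
        rw [smul_sub, smul_add]
        linear_combination (norm := module) hv
      have h5 : (↑(Submodule.orthogonalProjectionOnto L v) : Hh H) + ↑(Submodule.orthogonalProjectionOnto L₀ v) - v = 0 := by
        rcases smul_eq_zero.1 h4 with h | h
        · exact absurd h two_ne_zero
        · exact h
      have h6 : (↑(Submodule.orthogonalProjectionOnto L v) : Hh H) = v - ↑(Submodule.orthogonalProjectionOnto L₀ v) := by
        linear_combination (norm := module) h5
      have hmemO : (↑(Submodule.orthogonalProjectionOnto L v) : Hh H) ∈ L₀ᗮ := by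
        rw [h6]; exact Submodule.sub_starProjection_mem_orthogonal (K := L₀) v
      have hbot : (↑(Submodule.orthogonalProjectionOnto L v) : Hh H) ∈ L ⊓ L₀ᗮ :=
        ⟨(Submodule.orthogonalProjectionOnto L v).2, hmemO⟩
      rw [disjoint_iff.1 h3.1] at hbot
      have hPl0 : (↑(Submodule.orthogonalProjectionOnto L v) : Hh H) = 0 := by simpa using hbot
      have hvL0 : v ∈ L₀ := by
        have : v - (↑(Submodule.orthogonalProjectionOnto L₀ v) : Hh H) = 0 := by
          rw [← h6, hPl0]
        have hve : (↑(Submodule.orthogonalProjectionOnto L₀ v) : Hh H) = v := by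
          linear_combination (norm := module) -this
        exact Submodule.starProjection_eq_self_iff.1 hve
      have hvLo : v ∈ Lᗮ := by
        apply Submodule.orthogonalProjectionOnto_eq_zero_iff.1
        exact Subtype.ext hPl0
      have hJv : hatJ H v ∈ L ⊓ L₀ᗮ := ⟨hL.J_mem_orth hvLo, hL₀.J_mem hvL0⟩
      rw [disjoint_iff.1 h3.1] at hJv
      exact hatJ_eq_zero (by simpa using hJv)
    have hran : T.range = ⊤ := by
      rw [LinearMap.range_eq_top]
      intro w
      have hJw : hatJ H w ∈ L ⊔ L₀ᗮ := by rw [codisjoint_iff.1 h3.2]; trivial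
      obtain ⟨a, haL, b, hbO, hab⟩ := Submodule.mem_sup.1 hJw
      have hp : -(hatJ H b) ∈ L₀ := L₀.neg_mem (hL₀.J_mem_orth hbO)
      have hq : -(hatJ H a) ∈ Lᗮ := Lᗮ.neg_mem (hL.J_mem haL)
      have hw' : w = -(hatJ H a) + -(hatJ H b) := by
        have hJab := congrArg (hatJ H) hab
        simp only [map_add, hatJ_hatJ] at hJab
        linear_combination (norm := module) hJab
      obtain ⟨a', ha'L, ha'p⟩ := exists_proj_eq (codisjoint_iff.1 h3.2) hp
      have hqmem : -(hatJ H a) ∈ L ⊔ L₀ᗮ := by rw [codisjoint_iff.1 h3.2]; trivial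
      obtain ⟨l, hlL, m, hmO, hlm⟩ := Submodule.mem_sup.1 hqmem
      refine ⟨(2:ℂ)⁻¹ • (a' - m), ?_⟩
      rw [map_smul, ContinuousLinearMap.coe_coe, hTapp]
      have hm_eq : m = -(hatJ H a) - l := eq_sub_of_add_eq' hlm
      have hPl : (↑(Submodule.orthogonalProjectionOnto L (a' - m)) : Hh H) = a' + l := by
        rw [map_sub, hm_eq, map_sub, Submodule.coe_sub, Submodule.coe_sub,
          (show ((Submodule.orthogonalProjectionOnto L a' : Hh H)) = a' from Submodule.starProjection_eq_self_iff.2 ha'L),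
          Submodule.orthogonalProjectionOnto_apply_of_mem_orthogonal hq,
          (show ((Submodule.orthogonalProjectionOnto L l : Hh H)) = l from Submodule.starProjection_eq_self_iff.2 hlL)]
        show a' - ((0:Hh H) - l) = a' + l
        abel
      have hP0 : (↑(Submodule.orthogonalProjectionOnto L₀ (a' - m)) : Hh H) = -(hatJ H b) := by
        rw [map_sub, Submodule.coe_sub, ha'p,
          Submodule.orthogonalProjectionOnto_apply_of_mem_orthogonal hmO]
        show -(hatJ H b) - (0:Hh H) = -(hatJ H b)
        abel
      rw [hPl, hP0, hw', ← hlm]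
      match_scalars <;> ring
    let Teq : Hh H ≃L[ℂ] Hh H := ContinuousLinearEquiv.ofBijective T hker hran
    refine isUnit_iff_exists.2 ⟨Teq.symm.toContinuousLinearMap, ?_, ?_⟩
    · ext v
      show T (Teq.symm v) = v
      have h1 := Teq.apply_symm_apply v
      rwa [show Teq (Teq.symm v) = T (Teq.symm v) from rfl] at h1
    · ext v
      show Teq.symm (T v) = v
      have h1 := Teq.symm_apply_apply v
      rwa [show Teq v = T v from rfl] at h1
  tfae_have 5 → 4 := by
    intro h5
    rw [eq_top_iff]
    rintro w -
    obtain ⟨uT, huT⟩ := h5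
    obtain ⟨v, hv⟩ : ∃ v, (reflIn H L + reflIn H L₀) v = w := by
      refine ⟨(↑uT⁻¹ : Hh H →L[ℂ] Hh H) w, ?_⟩
      rw [← huT, ← ContinuousLinearMap.mul_apply, uT.mul_inv]
      rfl
    have hexp : (reflIn H L + reflIn H L₀) v = (2:ℂ) • (↑(Submodule.orthogonalProjectionOnto L v) : Hh H)
        + (2:ℂ) • ((↑(Submodule.orthogonalProjectionOnto L₀ v) : Hh H) - v) := by
      show reflIn H L v + reflIn H L₀ v = _
      simp only [reflIn, ContinuousLinearMap.sub_apply, ContinuousLinearMap.smul_apply,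
        ContinuousLinearMap.comp_apply, ContinuousLinearMap.one_apply,
        Submodule.subtypeL_apply, smul_sub]
      module
    have hmem2 : (↑(Submodule.orthogonalProjectionOnto L₀ v) : Hh H) - v ∈ L₀ᗮ := by
      have hn := L₀ᗮ.neg_mem (Submodule.sub_starProjection_mem_orthogonal (K := L₀) v)
      rwa [neg_sub] at hn
    exact Submodule.mem_sup.2 ⟨_, L.smul_mem _ (Submodule.orthogonalProjectionOnto L v).2, _,
      Submodule.smul_mem _ _ hmem2, by rw [← hexp]; exact hv⟩
  tfae_finish
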